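/- arXiv:1407.1164 — 2 statements merged into one kernel-verified Lean document; each statement's English description precedes it below -/
import Mathlib

section
/- With notation as in the greedy construction: c(p₁) ≥ … ≥ c(p_r), 0 ≤ T_min ≤ T_max pointwise, ∑_j T_min(p_j) ≤ 1 ≤ ∑_j T_max(p_j), and S* defined by S*(p₁) = min(T_max(p₁), 1 − ∑_{j≥2} T_min(p_j)), S*(p_k) = min(T_max(p_k), 1 − ∑_{j<k} S*(p_j) − ∑_{j>k} T_min(p_j)) for k ≥ 2. Then S* is feasible: T_min(p_k) ≤ S*(p_k) ≤ T_max(p_k) for all k and ∑_k S*(p_k) = 1. -/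
open Finset

lemma stmt17_split_lt {r : ℕ} (n : ℕ) (hn : n < r) (f : Fin r → ℝ) :
    ∑ j ∈ univ.filter (fun j : Fin r => (j : ℕ) < n + 1), f j
      = (∑ j ∈ univ.filter (fun j : Fin r => (j : ℕ) < n), f j) + f ⟨n, hn⟩ := by
  have h : univ.filter (fun j : Fin r => (j : ℕ) < n + 1)
      = insert ⟨n, hn⟩ (univ.filter (fun j : Fin r => (j : ℕ) < n)) := by
    ext j
    simp [Nat.lt_succ_iff_lt_or_eq, Fin.ext_iff, or_comm]
    exact Nat.le_iff_lt_or_eq.trans or_comm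
  rw [h, Finset.sum_insert (by simp)]
  ring

lemma stmt17_split_ge {r : ℕ} (n : ℕ) (hn : n < r) (f : Fin r → ℝ) :
    ∑ j ∈ univ.filter (fun j : Fin r => n ≤ (j : ℕ)), f j
      = f ⟨n, hn⟩ + ∑ j ∈ univ.filter (fun j : Fin r => n + 1 ≤ (j : ℕ)), f j := by
  have h : univ.filter (fun j : Fin r => n ≤ (j : ℕ))
      = insert ⟨n, hn⟩ (univ.filter (fun j : Fin r => n + 1 ≤ (j : ℕ))) := by
    ext j
    simp only [mem_filter, mem_univ, true_and, mem_insert]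
    constructor
    · intro h; rcases eq_or_lt_of_le h with h | h
      · left; exact Fin.ext h.symm
      · right; exact h
    · rintro (rfl | h)
      · exact le_refl _
      · omega
  rw [h, Finset.sum_insert (by simp)]

theorem stmt_17 (r : ℕ) (c : Fin r → ℝ) (hc : Antitone c)
    (Tmin Tmax : Fin r → ℝ)
    (h0 : ∀ p, 0 ≤ Tmin p) (hmm : ∀ p, Tmin p ≤ Tmax p)
    (hsum_min : ∑ p, Tmin p ≤ 1) (hsum_max : 1 ≤ ∑ p, Tmax p)
    (Sstar : Fin r → ℝ)
    (hgreedy : ∀ k : Fin r,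
      Sstar k = min (Tmax k)
        (1 - (∑ j ∈ Finset.univ.filter (fun j => j < k), Sstar j)
           - (∑ j ∈ Finset.univ.filter (fun j => k < j), Tmin j))) :
    (∀ k, Tmin k ≤ Sstar k ∧ Sstar k ≤ Tmax k) ∧ ∑ k, Sstar k = 1 := by
  classical
  set A : ℕ → ℝ := fun n => ∑ j ∈ univ.filter (fun j : Fin r => (j : ℕ) < n), Sstar j with hA
  set Bmin : ℕ → ℝ := fun n => ∑ j ∈ univ.filter (fun j : Fin r => n ≤ (j : ℕ)), Tmin j with hB
  set Bmax : ℕ → ℝ := fun n => ∑ j ∈ univ.filter (fun j : Fin r => n ≤ (j : ℕ)), Tmax j with hC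
  have hg' : ∀ k : Fin r, Sstar k = min (Tmax k) (1 - A k - Bmin (k + 1)) := by
    intro k
    have e1 : univ.filter (fun j : Fin r => j < k) = univ.filter (fun j : Fin r => (j : ℕ) < (k : ℕ)) :=
      Finset.filter_congr (fun j _ => by simp only [Fin.lt_def])
    have e2 : univ.filter (fun j : Fin r => k < j) = univ.filter (fun j : Fin r => (k : ℕ) + 1 ≤ (j : ℕ)) :=
      Finset.filter_congr (fun j _ => by simp only [Fin.lt_def, Nat.lt_iff_add_one_le])
    rw [hgreedy k, e1, e2]
  have hA0 : A 0 = 0 := by simp [hA]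
  have hAr : A r = ∑ k, Sstar k := by
    apply Finset.sum_congr _ (fun _ _ => rfl)
    ext j; simp [j.isLt]
  have hBmin0 : Bmin 0 = ∑ k, Tmin k := by
    apply Finset.sum_congr _ (fun _ _ => rfl); simp
  have hBmax0 : Bmax 0 = ∑ k, Tmax k := by
    apply Finset.sum_congr _ (fun _ _ => rfl); simp
  have hempty : univ.filter (fun j : Fin r => r ≤ (j : ℕ)) = ∅ := by
    ext j
    simp only [mem_filter, mem_univ, true_and, Finset.notMem_empty, iff_false, not_le]
    exact j.isLt
  have hBminr : Bmin r = 0 := by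
    show ∑ j ∈ univ.filter (fun j : Fin r => r ≤ (j : ℕ)), Tmin j = 0
    rw [hempty, Finset.sum_empty]
  have hBmaxr : Bmax r = 0 := by
    show ∑ j ∈ univ.filter (fun j : Fin r => r ≤ (j : ℕ)), Tmax j = 0
    rw [hempty, Finset.sum_empty]
  -- P : the lower-bound invariant
  have P : ∀ n ≤ r, A n + Bmin n ≤ 1 := by
    intro n hn
    match n with
    | 0 => rw [hA0, hBmin0]; linarith
    | Nat.succ m =>
      have hm : m < r := hn
      set k : Fin r := ⟨m, hm⟩ with hk
      have h1 : A (m + 1) = A m + Sstar k := stmt17_split_lt m hm Sstar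
      have h2 : Sstar k ≤ 1 - A m - Bmin (m + 1) := by
        rw [hg' k]; exact min_le_right _ _
      have : (k : ℕ) = m := rfl
      rw [h1]
      linarith [this ▸ h2]
  -- Q : the upper-bound invariant, by induction
  have Q : ∀ n, n ≤ r → 1 ≤ A n + Bmax n := by
    intro n
    induction n with
    | zero => intro _; rw [hA0, hBmax0]; linarith
    | succ m ih =>
      intro hn
      have hm : m < r := hn
      have ihm := ih (le_of_lt hm)
      set k : Fin r := ⟨m, hm⟩ with hk
      have h1 : A (m + 1) = A m + Sstar k := stmt17_split_lt m hm Sstar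
      have h2 : Bmax m = Tmax k + Bmax (m + 1) := stmt17_split_ge m hm Tmax
      have hBle : Bmin (m + 1) ≤ Bmax (m + 1) :=
        Finset.sum_le_sum (fun j _ => hmm j)
      have hck : ((k : ℕ) : ℕ) = m := rfl
      rcases min_cases (Tmax k) (1 - A k - Bmin (k + 1)) with ⟨hmin, _⟩ | ⟨hmin, hle⟩
      · have : Sstar k = Tmax k := (hg' k).trans hmin
        rw [h1, this]
        have : (k : ℕ) = m := rfl
        linarith [ihm, h2]
      · have hS : Sstar k = 1 - A m - Bmin (m + 1) := (hg' k).trans hmin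
        rw [h1, hS]
        linarith [hBle, h2]
  constructor
  · intro k
    have hkr : (k : ℕ) < r := k.isLt
    constructor
    · have hPk := P k (le_of_lt hkr)
      have hsplit : Bmin k = Tmin k + Bmin (k + 1) := by
        have := stmt17_split_ge (k : ℕ) hkr Tmin
        simpa only [Fin.eta] using this
      rw [hg' k]
      exact le_min (hmm k) (by linarith)
    · rw [hg' k]; exact min_le_left _ _
  · have h1 := P r le_rfl
    have h2 := Q r le_rfl
    rw [hAr, hBminr] at h1
    rw [hAr, hBmaxr] at h2
    linarith
end

section
/- For every split plan S in the greedy-feasible set and every m ∈ {1,…,r}, the greedy plan S* satisfies ∑_{k=1}^m S*(p_k) ≥ ∑_{k=1}^m S(p_k). -/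
theorem min_greedy_step (ta x ti y : ℝ) (hti : ti ≤ ta) :
    min ta (1 - min x (1 - (ti + y)) - y) + min x (1 - (ti + y)) = min (ta + x) (1 - y) := by
  rcases le_total x (1 - (ti + y)) with h | h
  · rw [min_eq_left h]
    rcases le_total ta (1 - x - y) with h2 | h2
    · rw [min_eq_left h2, min_eq_left (by linarith)]
    · rw [min_eq_right h2, min_eq_right (by linarith)]
      ring
  · rw [min_eq_right h]
    have e : 1 - (1 - (ti + y)) - y = ti := by ring
    rw [e, min_eq_right hti, min_eq_right (by linarith)]
    ring

theorem stmt_18 (r : ℕ) (c : Fin r → ℝ) (hc : Antitone c)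
    (Tmin Tmax : Fin r → ℝ)
    (h0 : ∀ p, 0 ≤ Tmin p) (hmm : ∀ p, Tmin p ≤ Tmax p)
    (hsum_min : ∑ p, Tmin p ≤ 1) (hsum_max : 1 ≤ ∑ p, Tmax p)
    (Sstar : Fin r → ℝ)
    (hgreedy : ∀ k : Fin r,
      Sstar k = min (Tmax k)
        (1 - (∑ j ∈ Finset.univ.filter (fun j => j < k), Sstar j)
           - (∑ j ∈ Finset.univ.filter (fun j => k < j), Tmin j))) :
    ∀ S : Fin r → ℝ, ((∑ p, S p = 1) ∧ ∀ p, Tmin p ≤ S p ∧ S p ≤ Tmax p) →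
      ∀ m : ℕ, m ≤ r →
        ∑ k ∈ Finset.univ.filter (fun k : Fin r => (k : ℕ) < m), S k ≤
        ∑ k ∈ Finset.univ.filter (fun k : Fin r => (k : ℕ) < m), Sstar k := by
  rintro S ⟨hS1, hS2⟩
  have key : ∀ m, m ≤ r →
      (∑ k ∈ Finset.univ.filter (fun k : Fin r => (k : ℕ) < m), Sstar k)
      = min (∑ k ∈ Finset.univ.filter (fun k : Fin r => (k : ℕ) < m), Tmax k)
          (1 - ∑ k ∈ Finset.univ.filter (fun k : Fin r => ¬ (k : ℕ) < m), Tmin k) := by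
    intro m
    induction m with
    | zero =>
      intro _
      have h1 : Finset.univ.filter (fun k : Fin r => (k : ℕ) < 0) = ∅ := by
        ext k; simp
      have h2 : Finset.univ.filter (fun k : Fin r => ¬ (k : ℕ) < 0) = Finset.univ := by
        ext k; simp
      rw [h1, h2]
      simp only [Finset.sum_empty]
      rw [min_eq_left (by linarith)]
    | succ n ih =>
      intro hm
      have hn : n < r := hm
      set i : Fin r := ⟨n, hn⟩ with hi
      have hins : Finset.univ.filter (fun k : Fin r => (k : ℕ) < n + 1)
          = insert i (Finset.univ.filter (fun k : Fin r => (k : ℕ) < n)) := by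
        ext k
        simp [Fin.ext_iff, hi]
        omega
      have hnotmem : i ∉ Finset.univ.filter (fun k : Fin r => (k : ℕ) < n) := by
        simp [hi]
      have hCsplit : Finset.univ.filter (fun k : Fin r => ¬ (k : ℕ) < n)
          = insert i (Finset.univ.filter (fun k : Fin r => ¬ (k : ℕ) < n + 1)) := by
        ext k
        simp [Fin.ext_iff, hi]
        omega
      have hnotmem2 : i ∉ Finset.univ.filter (fun k : Fin r => ¬ (k : ℕ) < n + 1) := by
        simp [hi]
      have hfilt1 : Finset.univ.filter (fun j : Fin r => j < i)
          = Finset.univ.filter (fun k : Fin r => (k : ℕ) < n) := by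
        ext k; simp [Fin.lt_def, hi]
      have hfilt2 : Finset.univ.filter (fun j : Fin r => i < j)
          = Finset.univ.filter (fun k : Fin r => ¬ (k : ℕ) < n + 1) := by
        ext k; simp [Fin.lt_def, hi]
      have hg := hgreedy i
      rw [hfilt1, hfilt2] at hg
      have hCn : (∑ k ∈ Finset.univ.filter (fun k : Fin r => ¬ (k : ℕ) < n), Tmin k)
          = Tmin i + ∑ k ∈ Finset.univ.filter (fun k : Fin r => ¬ (k : ℕ) < n + 1), Tmin k := by
        rw [hCsplit, Finset.sum_insert hnotmem2]
      rw [hins, Finset.sum_insert hnotmem, Finset.sum_insert hnotmem, hg,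
        ih (le_of_lt hn), hCn]
      exact min_greedy_step _ _ _ _ (hmm i)
  intro m hm
  rw [key m hm]
  have hsplit := Finset.sum_filter_add_sum_filter_not Finset.univ (fun k : Fin r => (k : ℕ) < m) S
  rw [hS1] at hsplit
  refine le_min ?_ ?_
  · exact Finset.sum_le_sum (fun k _ => (hS2 k).2)
  · have : (∑ k ∈ Finset.univ.filter (fun k : Fin r => ¬ (k : ℕ) < m), Tmin k)
        ≤ ∑ k ∈ Finset.univ.filter (fun k : Fin r => ¬ (k : ℕ) < m), S k :=
      Finset.sum_le_sum (fun k _ => (hS2 k).1)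
    linarith
end
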